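/- Let U_1, ..., U_d be i.i.d. Beta(a, b) random variables and W an independent Gamma(a+b, β) random variable, and set Y_i = W·U_i. Then for all i ≠ j, the correlation Corr(Y_i, Y_j) = a/(a+b). -/

import Mathlib

open MeasureTheory ProbabilityTheory

/-- The density of the Beta(a, b) distribution on (0,1). -/
noncomputable def betaPDFReal (a b u : ℝ) : ℝ :=
  if 0 < u ∧ u < 1 then
    Real.Gamma (a + b) / (Real.Gamma a * Real.Gamma b) * u ^ (a - 1) * (1 - u) ^ (b - 1)
  else 0

/-- The Beta(a, b) measure on ℝ. -/
noncomputable def betaMeasure (a b : ℝ) : Measure ℝ :=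
  volume.withDensity fun u => ENNReal.ofReal (_root_.betaPDFReal a b u)

open Real Set
open scoped ENNReal NNReal

lemma integral_ofReal_withDensity {f : ℝ → ℝ} (hf : Measurable f) (h0 : ∀ x, 0 ≤ f x) (g : ℝ → ℝ) :
    ∫ x, g x ∂(volume.withDensity fun x => ENNReal.ofReal (f x)) = ∫ x, g x * f x := by
  have h : (fun x => ENNReal.ofReal (f x)) = fun x => ((f x).toNNReal : ℝ≥0∞) := rfl
  rw [h, integral_withDensity_eq_integral_smul hf.real_toNNReal g]
  congr 1; funext x
  simp [NNReal.smul_def, Real.coe_toNNReal _ (h0 x), mul_comm]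

lemma integrable_withDensity_ofReal_iff {f : ℝ → ℝ} (hf : Measurable f) (h0 : ∀ x, 0 ≤ f x)
    {g : ℝ → ℝ} :
    Integrable g (volume.withDensity fun x => ENNReal.ofReal (f x)) ↔
      Integrable (fun x => g x * f x) volume := by
  rw [integrable_withDensity_iff hf.ennreal_ofReal (ae_of_all _ fun x => ENNReal.ofReal_lt_top)]
  simp_rw [ENNReal.toReal_ofReal (h0 _)]

lemma gammaPDFReal_rec {a r : ℝ} (ha : 0 < a) (hr : 0 < r) (x : ℝ) :
    x * gammaPDFReal a r x = (a / r) * gammaPDFReal (a + 1) r x := by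
  unfold ProbabilityTheory.gammaPDFReal
  split_ifs with h
  · rcases eq_or_lt_of_le h with h0 | hx
    · rw [show a + 1 - 1 = a from by ring, ← h0]
      simp [Real.zero_rpow ha.ne']
    · have h1 : Real.Gamma (a + 1) = a * Real.Gamma a := Real.Gamma_add_one ha.ne'
      have h2 : r ^ (a + 1) = r ^ a * r := Real.rpow_add_one hr.ne' a
      have h3 : x ^ (a + 1 - 1) = x ^ (a - 1) * x := by
        rw [show a + 1 - 1 = (a - 1) + 1 from by ring, Real.rpow_add_one hx.ne' _]
      have hΓ := Real.Gamma_pos_of_pos ha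
      rw [h1, h2, h3]
      field_simp
  · simp

lemma integrable_gammaPDFReal {a r : ℝ} (ha : 0 < a) (hr : 0 < r) :
    Integrable (gammaPDFReal a r) := by
  refine ⟨(measurable_gammaPDFReal a r).aestronglyMeasurable, ?_⟩
  rw [hasFiniteIntegral_iff_ofReal (ae_of_all _ (gammaPDFReal_nonneg ha hr))]
  have h1 : ∫⁻ x, ENNReal.ofReal (gammaPDFReal a r x) = 1 := lintegral_gammaPDF_eq_one ha hr
  rw [h1]
  exact ENNReal.one_lt_top

lemma integral_gammaPDFReal_eq_one {a r : ℝ} (ha : 0 < a) (hr : 0 < r) :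
    ∫ x, gammaPDFReal a r x = 1 := by
  rw [integral_eq_lintegral_of_nonneg_ae (ae_of_all _ (gammaPDFReal_nonneg ha hr))
    (measurable_gammaPDFReal a r).aestronglyMeasurable]
  have h1 : ∫⁻ x, ENNReal.ofReal (gammaPDFReal a r x) = 1 := lintegral_gammaPDF_eq_one ha hr
  rw [h1]; simp

lemma integral_id_gammaMeasure {a r : ℝ} (ha : 0 < a) (hr : 0 < r) :
    ∫ x, x ∂(gammaMeasure a r) = a / r := by
  rw [gammaMeasure,
    show gammaPDF a r = fun x => ENNReal.ofReal (gammaPDFReal a r x) from rfl,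
    integral_ofReal_withDensity (measurable_gammaPDFReal a r) (gammaPDFReal_nonneg ha hr)]
  calc ∫ x, x * gammaPDFReal a r x = ∫ x, (a / r) * gammaPDFReal (a + 1) r x := by
        simp_rw [gammaPDFReal_rec ha hr]
    _ = (a / r) * ∫ x, gammaPDFReal (a + 1) r x := integral_const_mul _ _
    _ = a / r := by rw [integral_gammaPDFReal_eq_one (by linarith) hr, mul_one]

lemma gammaPDFReal_rec2 {a r : ℝ} (ha : 0 < a) (hr : 0 < r) (x : ℝ) :
    x ^ 2 * gammaPDFReal a r x = (a * (a + 1) / r ^ 2) * gammaPDFReal (a + 2) r x := by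
  have h1 := gammaPDFReal_rec ha hr x
  have h2 := gammaPDFReal_rec (a := a + 1) (by linarith) hr x
  calc x ^ 2 * gammaPDFReal a r x = x * (x * gammaPDFReal a r x) := by ring
    _ = x * ((a / r) * gammaPDFReal (a + 1) r x) := by rw [h1]
    _ = (a / r) * (x * gammaPDFReal (a + 1) r x) := by ring
    _ = (a / r) * ((a + 1) / r * gammaPDFReal (a + 1 + 1) r x) := by rw [h2]
    _ = (a * (a + 1) / r ^ 2) * gammaPDFReal (a + 2) r x := by
        rw [show a + 1 + 1 = a + 2 from by ring]; ring

lemma integral_sq_gammaMeasure {a r : ℝ} (ha : 0 < a) (hr : 0 < r) :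
    ∫ x, x ^ 2 ∂(gammaMeasure a r) = a * (a + 1) / r ^ 2 := by
  rw [gammaMeasure,
    show gammaPDF a r = fun x => ENNReal.ofReal (gammaPDFReal a r x) from rfl,
    integral_ofReal_withDensity (measurable_gammaPDFReal a r) (gammaPDFReal_nonneg ha hr)]
  calc ∫ x, x ^ 2 * gammaPDFReal a r x
      = ∫ x, (a * (a + 1) / r ^ 2) * gammaPDFReal (a + 2) r x := by
        simp_rw [gammaPDFReal_rec2 ha hr]
    _ = (a * (a + 1) / r ^ 2) * ∫ x, gammaPDFReal (a + 2) r x := integral_const_mul _ _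
    _ = a * (a + 1) / r ^ 2 := by rw [integral_gammaPDFReal_eq_one (by linarith) hr, mul_one]

lemma integrable_id_gammaMeasure {a r : ℝ} (ha : 0 < a) (hr : 0 < r) :
    Integrable (fun x => x) (gammaMeasure a r) := by
  rw [gammaMeasure, show gammaPDF a r = fun x => ENNReal.ofReal (gammaPDFReal a r x) from rfl,
    integrable_withDensity_ofReal_iff (measurable_gammaPDFReal a r) (gammaPDFReal_nonneg ha hr)]
  have h : (fun x => x * gammaPDFReal a r x) = fun x => (a / r) * gammaPDFReal (a + 1) r x :=
    funext (gammaPDFReal_rec ha hr)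
  rw [h]
  exact (integrable_gammaPDFReal (by linarith) hr).const_mul _

lemma integrable_sq_gammaMeasure {a r : ℝ} (ha : 0 < a) (hr : 0 < r) :
    Integrable (fun x => x ^ 2) (gammaMeasure a r) := by
  rw [gammaMeasure, show gammaPDF a r = fun x => ENNReal.ofReal (gammaPDFReal a r x) from rfl,
    integrable_withDensity_ofReal_iff (measurable_gammaPDFReal a r) (gammaPDFReal_nonneg ha hr)]
  have h : (fun x => x ^ 2 * gammaPDFReal a r x)
      = fun x => (a * (a + 1) / r ^ 2) * gammaPDFReal (a + 2) r x :=
    funext (gammaPDFReal_rec2 ha hr)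
  rw [h]
  exact (integrable_gammaPDFReal (by linarith) hr).const_mul _

lemma measurable_betaPDFReal (a b : ℝ) : Measurable (_root_.betaPDFReal a b) := by
  unfold _root_.betaPDFReal
  have hs : MeasurableSet {u : ℝ | 0 < u ∧ u < 1} := measurableSet_Ioo
  exact Measurable.ite hs
    (((measurable_id.pow measurable_const).const_mul _).mul
      ((measurable_const.sub measurable_id).pow measurable_const)) measurable_const

lemma betaPDFReal_nonneg {a b : ℝ} (ha : 0 < a) (hb : 0 < b) (x : ℝ) :
    0 ≤ _root_.betaPDFReal a b x := by
  unfold _root_.betaPDFReal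
  split_ifs with h
  · have h1 := Real.Gamma_pos_of_pos ha
    have h2 := Real.Gamma_pos_of_pos hb
    have h3 := Real.Gamma_pos_of_pos (show (0:ℝ) < a + b by linarith)
    have h4 : (0:ℝ) < x := h.1
    have h5 : (0:ℝ) < 1 - x := by linarith [h.2]
    positivity
  · exact le_refl _

lemma real_betaIntegral {a b : ℝ} (ha : 0 < a) (hb : 0 < b) :
    ∫ x in (0:ℝ)..1, x ^ (a - 1) * (1 - x) ^ (b - 1)
      = Real.Gamma a * Real.Gamma b / Real.Gamma (a + b) := by
  have ha' : 0 < (a : ℂ).re := by simpa using ha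
  have hb' : 0 < (b : ℂ).re := by simpa using hb
  have key := Complex.Gamma_mul_Gamma_eq_betaIntegral ha' hb'
  have hbeta : Complex.betaIntegral a b
      = ((∫ x in (0:ℝ)..1, x ^ (a - 1) * (1 - x) ^ (b - 1) : ℝ) : ℂ) := by
    rw [Complex.betaIntegral, ← intervalIntegral.integral_ofReal]
    apply intervalIntegral.integral_congr
    intro x hx
    rw [Set.uIcc_of_le (by norm_num : (0:ℝ) ≤ 1)] at hx
    have hx0 : 0 ≤ x := hx.1
    have hx1 : 0 ≤ 1 - x := by linarith [hx.2]
    simp only []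
    rw [Complex.ofReal_mul, Complex.ofReal_cpow hx0, Complex.ofReal_cpow hx1]
    push_cast
    ring
  rw [hbeta, ← Complex.ofReal_add, Complex.Gamma_ofReal, Complex.Gamma_ofReal,
    Complex.Gamma_ofReal] at key
  have key' : Real.Gamma a * Real.Gamma b
      = Real.Gamma (a + b) * ∫ x in (0:ℝ)..1, x ^ (a - 1) * (1 - x) ^ (b - 1) := by
    exact_mod_cast key
  have hΓ : Real.Gamma (a + b) ≠ 0 := (Real.Gamma_pos_of_pos (by linarith)).ne'
  field_simp
  linarith [key']

lemma intervalIntegrable_beta {a b : ℝ} (ha : 0 < a) (hb : 0 < b) :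
    IntegrableOn (fun x : ℝ => x ^ (a - 1) * (1 - x) ^ (b - 1)) (Ioo 0 1) := by
  have ha' : 0 < (a : ℂ).re := by simpa using ha
  have hb' : 0 < (b : ℂ).re := by simpa using hb
  have hc := (Complex.betaIntegral_convergent ha' hb').norm
  have h1 : IntegrableOn (fun x : ℝ => ‖(x:ℂ) ^ ((a:ℂ) - 1) * (1 - (x:ℂ)) ^ ((b:ℂ) - 1)‖)
      (Ioc 0 1) volume := by
    rw [← intervalIntegrable_iff_integrableOn_Ioc_of_le (by norm_num : (0:ℝ) ≤ 1)]
    exact hc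
  have h2 := h1.mono_set Ioo_subset_Ioc_self
  refine (h2.congr_fun ?_ measurableSet_Ioo)
  intro x hx
  have hx0 : (0:ℝ) < x := hx.1
  have hx1 : (0:ℝ) < 1 - x := by linarith [hx.2]
  have hbase : (1 : ℂ) - (x : ℂ) = ((1 - x : ℝ) : ℂ) := by push_cast; ring
  simp only []
  rw [norm_mul, hbase,
    Complex.norm_cpow_eq_rpow_re_of_pos hx0, Complex.norm_cpow_eq_rpow_re_of_pos hx1]
  simp [Complex.sub_re, Complex.one_re, Complex.ofReal_re]

lemma betaPDFReal_indicator (a b : ℝ) :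
    _root_.betaPDFReal a b = (Ioo (0:ℝ) 1).indicator (_root_.betaPDFReal a b) := by
  funext x
  by_cases h : x ∈ Ioo (0:ℝ) 1
  · rw [Set.indicator_of_mem h]
  · rw [Set.indicator_of_notMem h]
    unfold _root_.betaPDFReal
    rw [if_neg]
    simpa [Set.mem_Ioo] using h

lemma betaPDFReal_eqOn (a b : ℝ) :
    EqOn (_root_.betaPDFReal a b)
      (fun x => (Real.Gamma (a + b) / (Real.Gamma a * Real.Gamma b))
        * (x ^ (a - 1) * (1 - x) ^ (b - 1))) (Ioo 0 1) := by
  intro x hx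
  unfold _root_.betaPDFReal
  rw [if_pos ⟨hx.1, hx.2⟩]; ring

lemma integral_betaPDFReal_eq_one {a b : ℝ} (ha : 0 < a) (hb : 0 < b) :
    ∫ x, _root_.betaPDFReal a b x = 1 := by
  conv_lhs => rw [betaPDFReal_indicator a b]
  rw [integral_indicator measurableSet_Ioo,
    setIntegral_congr_fun measurableSet_Ioo (betaPDFReal_eqOn a b), integral_const_mul,
    ← integral_Ioc_eq_integral_Ioo,
    ← intervalIntegral.integral_of_le (by norm_num : (0:ℝ) ≤ 1),
    real_betaIntegral ha hb]
  have hΓa := Real.Gamma_pos_of_pos ha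
  have hΓb := Real.Gamma_pos_of_pos hb
  have hΓab := Real.Gamma_pos_of_pos (show (0:ℝ) < a + b by linarith)
  field_simp

lemma integrable_betaPDFReal {a b : ℝ} (ha : 0 < a) (hb : 0 < b) :
    Integrable (_root_.betaPDFReal a b) := by
  rw [betaPDFReal_indicator a b, integrable_indicator_iff measurableSet_Ioo]
  exact IntegrableOn.congr_fun ((intervalIntegrable_beta ha hb).const_mul _)
    (fun x hx => (betaPDFReal_eqOn a b hx).symm) measurableSet_Ioo

lemma betaPDFReal_rec {a b : ℝ} (ha : 0 < a) (hb : 0 < b) (x : ℝ) :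
    x * _root_.betaPDFReal a b x = (a / (a + b)) * _root_.betaPDFReal (a + 1) b x := by
  unfold _root_.betaPDFReal
  split_ifs with h
  · have hx := h.1
    have h1 : Real.Gamma (a + 1) = a * Real.Gamma a := Real.Gamma_add_one ha.ne'
    have h2 : Real.Gamma (a + 1 + b) = (a + b) * Real.Gamma (a + b) := by
      rw [show a + 1 + b = (a + b) + 1 from by ring,
        Real.Gamma_add_one (show a + b ≠ 0 from by positivity)]
    have h3 : x ^ (a + 1 - 1) = x ^ (a - 1) * x := by
      rw [show a + 1 - 1 = (a - 1) + 1 from by ring, Real.rpow_add_one hx.ne' _]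
    rw [h1, h2, h3]
    have hΓa := Real.Gamma_pos_of_pos ha
    have hΓb := Real.Gamma_pos_of_pos hb
    have hΓab := Real.Gamma_pos_of_pos (show (0:ℝ) < a + b by linarith)
    field_simp
  · simp

lemma betaPDFReal_rec2 {a b : ℝ} (ha : 0 < a) (hb : 0 < b) (x : ℝ) :
    x ^ 2 * _root_.betaPDFReal a b x
      = (a * (a + 1) / ((a + b) * (a + b + 1))) * _root_.betaPDFReal (a + 2) b x := by
  have h1 := betaPDFReal_rec ha hb x
  have h2 := betaPDFReal_rec (a := a + 1) (by linarith) hb x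
  calc x ^ 2 * _root_.betaPDFReal a b x = x * (x * _root_.betaPDFReal a b x) := by ring
    _ = x * ((a / (a + b)) * _root_.betaPDFReal (a + 1) b x) := by rw [h1]
    _ = (a / (a + b)) * (x * _root_.betaPDFReal (a + 1) b x) := by ring
    _ = (a / (a + b)) * ((a + 1) / (a + 1 + b) * _root_.betaPDFReal (a + 1 + 1) b x) := by rw [h2]
    _ = (a * (a + 1) / ((a + b) * (a + b + 1))) * _root_.betaPDFReal (a + 2) b x := by
        rw [show a + 1 + 1 = a + 2 from by ring, show a + 1 + b = a + b + 1 from by ring]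
        have hab : (a + b) ≠ 0 := by positivity
        have hab1 : (a + b + 1) ≠ 0 := by positivity
        field_simp

lemma integral_id_betaMeasure {a b : ℝ} (ha : 0 < a) (hb : 0 < b) :
    ∫ x, x ∂(_root_.betaMeasure a b) = a / (a + b) := by
  rw [_root_.betaMeasure, integral_ofReal_withDensity (_root_.measurable_betaPDFReal a b)
    (betaPDFReal_nonneg ha hb)]
  calc ∫ x, x * _root_.betaPDFReal a b x
      = ∫ x, (a / (a + b)) * _root_.betaPDFReal (a + 1) b x := by simp_rw [betaPDFReal_rec ha hb]
    _ = (a / (a + b)) * ∫ x, _root_.betaPDFReal (a + 1) b x := integral_const_mul _ _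
    _ = a / (a + b) := by rw [integral_betaPDFReal_eq_one (by linarith) hb, mul_one]

lemma integral_sq_betaMeasure {a b : ℝ} (ha : 0 < a) (hb : 0 < b) :
    ∫ x, x ^ 2 ∂(_root_.betaMeasure a b) = a * (a + 1) / ((a + b) * (a + b + 1)) := by
  rw [_root_.betaMeasure, integral_ofReal_withDensity (_root_.measurable_betaPDFReal a b)
    (betaPDFReal_nonneg ha hb)]
  calc ∫ x, x ^ 2 * _root_.betaPDFReal a b x
      = ∫ x, (a * (a + 1) / ((a + b) * (a + b + 1))) * _root_.betaPDFReal (a + 2) b x := by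
        simp_rw [betaPDFReal_rec2 ha hb]
    _ = (a * (a + 1) / ((a + b) * (a + b + 1))) * ∫ x, _root_.betaPDFReal (a + 2) b x :=
        integral_const_mul _ _
    _ = a * (a + 1) / ((a + b) * (a + b + 1)) := by
        rw [integral_betaPDFReal_eq_one (by linarith) hb, mul_one]

lemma integrable_id_betaMeasure {a b : ℝ} (ha : 0 < a) (hb : 0 < b) :
    Integrable (fun x => x) (_root_.betaMeasure a b) := by
  rw [_root_.betaMeasure, integrable_withDensity_ofReal_iff (_root_.measurable_betaPDFReal a b)
    (betaPDFReal_nonneg ha hb)]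
  have h : (fun x => x * _root_.betaPDFReal a b x)
      = fun x => (a / (a + b)) * _root_.betaPDFReal (a + 1) b x := funext (betaPDFReal_rec ha hb)
  rw [h]
  exact (integrable_betaPDFReal (by linarith) hb).const_mul _

lemma integrable_sq_betaMeasure {a b : ℝ} (ha : 0 < a) (hb : 0 < b) :
    Integrable (fun x => x ^ 2) (_root_.betaMeasure a b) := by
  rw [_root_.betaMeasure, integrable_withDensity_ofReal_iff (_root_.measurable_betaPDFReal a b)
    (betaPDFReal_nonneg ha hb)]
  have h : (fun x => x ^ 2 * _root_.betaPDFReal a b x)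
      = fun x => (a * (a + 1) / ((a + b) * (a + b + 1))) * _root_.betaPDFReal (a + 2) b x :=
    funext (betaPDFReal_rec2 ha hb)
  rw [h]
  exact (integrable_betaPDFReal (by linarith) hb).const_mul _

/-- For the multivariate gamma vector `Y_i = W·U_i` with `U_1,...,U_d` i.i.d. Beta(a,b)
and `W ~ Gamma(a+b, β)` independent of them, `Corr(Y_i, Y_j) = a/(a+b)` for `i ≠ j`. -/
theorem multivariate_gamma_corr {Ω : Type*} [MeasurableSpace Ω]
    (μ : Measure Ω) [IsProbabilityMeasure μ]
    (d : ℕ) (a b β : ℝ) (ha : 0 < a) (hb : 0 < b) (hβ : 0 < β)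
    (U : Fin d → Ω → ℝ) (W : Ω → ℝ)
    (hUm : ∀ i, Measurable (U i)) (hWm : Measurable W)
    (hU : ∀ i, μ.map (U i) = _root_.betaMeasure a b)
    (hW : μ.map W = gammaMeasure (a + b) β)
    (hind : iIndepFun (Fin.cons W U : Fin (d + 1) → Ω → ℝ) μ)
    (Y : Fin d → Ω → ℝ) (hY : ∀ i ω, Y i ω = W ω * U i ω) :
    ∀ i j : Fin d, i ≠ j →
      (μ[fun ω => Y i ω * Y j ω] - μ[Y i] * μ[Y j]) /
          (Real.sqrt (variance (Y i) μ) * Real.sqrt (variance (Y j) μ)) =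
        a / (a + b) := by
  intro i j hij
  have habpos : (0:ℝ) < a + b := by linarith
  -- expectations of W
  have hEW : μ[W] = (a + b) / β := by
    calc μ[W] = ∫ x, x ∂(μ.map W) :=
          (integral_map hWm.aemeasurable aestronglyMeasurable_id).symm
      _ = (a + b) / β := by rw [hW]; exact integral_id_gammaMeasure habpos hβ
  have hEW2 : ∫ ω, W ω ^ 2 ∂μ = (a + b) * (a + b + 1) / β ^ 2 := by
    calc ∫ ω, W ω ^ 2 ∂μ = ∫ x, x ^ 2 ∂(μ.map W) :=
          (integral_map hWm.aemeasurable
            (measurable_id.pow_const 2).aestronglyMeasurable).symm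
      _ = (a + b) * (a + b + 1) / β ^ 2 := by
          rw [hW]; exact integral_sq_gammaMeasure habpos hβ
  have hIW : Integrable W μ := by
    have h := (integrable_map_measure aestronglyMeasurable_id hWm.aemeasurable).mp
      (by rw [hW]; exact integrable_id_gammaMeasure habpos hβ)
    simpa [Function.comp] using h
  have hIW2 : Integrable (fun ω => W ω ^ 2) μ := by
    have h := (integrable_map_measure (measurable_id.pow_const 2).aestronglyMeasurable
      hWm.aemeasurable).mp (by rw [hW]; exact integrable_sq_gammaMeasure habpos hβ)
    simpa [Function.comp_def] using h
  -- expectations of U k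
  have hEU : ∀ k : Fin d, μ[U k] = a / (a + b) := by
    intro k
    calc μ[U k] = ∫ x, x ∂(μ.map (U k)) :=
          (integral_map (hUm k).aemeasurable aestronglyMeasurable_id).symm
      _ = a / (a + b) := by rw [hU k]; exact integral_id_betaMeasure ha hb
  have hEU2 : ∀ k : Fin d, ∫ ω, U k ω ^ 2 ∂μ = a * (a + 1) / ((a + b) * (a + b + 1)) := by
    intro k
    calc ∫ ω, U k ω ^ 2 ∂μ = ∫ x, x ^ 2 ∂(μ.map (U k)) :=
          (integral_map (hUm k).aemeasurable
            (measurable_id.pow_const 2).aestronglyMeasurable).symm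
      _ = a * (a + 1) / ((a + b) * (a + b + 1)) := by
          rw [hU k]; exact integral_sq_betaMeasure ha hb
  have hIU : ∀ k : Fin d, Integrable (U k) μ := by
    intro k
    have h := (integrable_map_measure aestronglyMeasurable_id (hUm k).aemeasurable).mp
      (by rw [hU k]; exact integrable_id_betaMeasure ha hb)
    simpa [Function.comp] using h
  have hIU2 : ∀ k : Fin d, Integrable (fun ω => U k ω ^ 2) μ := by
    intro k
    have h := (integrable_map_measure (measurable_id.pow_const 2).aestronglyMeasurable
      (hUm k).aemeasurable).mp (by rw [hU k]; exact integrable_sq_betaMeasure ha hb)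
    simpa [Function.comp_def] using h
  -- independence facts
  have hm : ∀ k, Measurable ((Fin.cons W U : Fin (d + 1) → Ω → ℝ) k) := by
    intro k
    refine Fin.cases ?_ ?_ k
    · simpa using hWm
    · intro l; simpa using hUm l
  have hWUi : ∀ k : Fin d, IndepFun W (U k) μ := by
    intro k
    have h := hind.indepFun (i := 0) (j := k.succ) (Fin.succ_ne_zero k).symm
    simpa using h
  have hUij : IndepFun (U i) (U j) μ := by
    have h := hind.indepFun (i := i.succ) (j := j.succ)
      (fun hsucc => hij (Fin.succ_injective _ hsucc))
    simpa using h
  have hWUiUj : IndepFun (fun ω => U i ω * U j ω) (fun ω => W ω ^ 2) μ := by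
    have h := hind.indepFun_prodMk hm i.succ j.succ 0
      (Fin.succ_ne_zero i) (Fin.succ_ne_zero j)
    have h2 := h.comp (φ := fun p : ℝ × ℝ => p.1 * p.2) (ψ := fun x : ℝ => x ^ 2)
      (measurable_fst.mul measurable_snd) (measurable_id.pow_const 2)
    simpa [Function.comp_def] using h2
  -- squared independence
  have hsqind : ∀ k : Fin d, IndepFun (fun ω => W ω ^ 2) (fun ω => U k ω ^ 2) μ := by
    intro k
    have h := (hWUi k).comp (φ := fun x : ℝ => x ^ 2) (ψ := fun x : ℝ => x ^ 2)
      (measurable_id.pow_const 2) (measurable_id.pow_const 2)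
    simpa [Function.comp_def] using h
  -- mean of Y
  have hEY : ∀ k : Fin d, μ[Y k] = a / β := by
    intro k
    rw [show Y k = W * U k from funext fun ω => hY k ω,
      (hWUi k).integral_mul_eq_mul_integral hWm.aestronglyMeasurable (hUm k).aestronglyMeasurable,
      hEW, hEU k]
    field_simp
  -- second moment of Y
  have hEYsqeq : ∀ k : Fin d,
      (Y k) ^ 2 = (fun ω => W ω ^ 2) * (fun ω => U k ω ^ 2) := by
    intro k
    funext ω
    simp [hY]
    ring
  have hEY2 : ∀ k : Fin d, μ[(Y k) ^ 2] = a * (a + 1) / β ^ 2 := by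
    intro k
    rw [hEYsqeq k,
      (hsqind k).integral_mul_eq_mul_integral (hWm.pow_const 2).aestronglyMeasurable
        ((hUm k).pow_const 2).aestronglyMeasurable, hEW2, hEU2 k]
    have h3 : a + b + 1 ≠ 0 := by positivity
    field_simp
  have hIYsq : ∀ k : Fin d, Integrable ((Y k) ^ 2) μ := by
    intro k
    rw [hEYsqeq k]
    exact (hsqind k).integrable_mul hIW2 (hIU2 k)
  have hMem : ∀ k : Fin d, MemLp (Y k) 2 μ := by
    intro k
    refine (memLp_two_iff_integrable_sq ?_).2 (hIYsq k)
    rw [show Y k = W * U k from funext fun ω => hY k ω]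
    exact (hWm.mul (hUm k)).aestronglyMeasurable
  have hvar : ∀ k : Fin d, variance (Y k) μ = a / β ^ 2 := by
    intro k
    rw [variance_eq_sub (hMem k), hEY2 k, hEY k]
    field_simp
    ring
  -- covariance term
  have hcov : μ[fun ω => Y i ω * Y j ω] = a ^ 2 * (a + b + 1) / (β ^ 2 * (a + b)) := by
    have he : (fun ω => Y i ω * Y j ω)
        = (fun ω => W ω ^ 2) * (fun ω => U i ω * U j ω) := by
      funext ω
      simp [hY]
      ring
    rw [he, hWUiUj.symm.integral_mul_eq_mul_integral (hWm.pow_const 2).aestronglyMeasurable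
      ((hUm i).mul (hUm j)).aestronglyMeasurable, hEW2,
      show (fun ω => U i ω * U j ω) = U i * U j from rfl,
      hUij.integral_mul_eq_mul_integral (hUm i).aestronglyMeasurable (hUm j).aestronglyMeasurable,
      hEU i, hEU j]
    have h3 : a + b + 1 ≠ 0 := by positivity
    field_simp
  rw [hcov, hEY i, hEY j, hvar i, hvar j,
    Real.mul_self_sqrt (by positivity : (0:ℝ) ≤ a / β ^ 2)]
  have h3 : a + b + 1 ≠ 0 := by positivity
  field_simp
  ring
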